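/- For γ > 0 and c > 0, the function h(p) = ln(1+pγ) − (p+c)γ/(1+pγ) is strictly increasing on [0, ∞), satisfies h(0) = −cγ < 0, and tends to +∞ as p → ∞; hence it has a unique positive root. -/

import Mathlib

theorem h_strictMono_unique_root (γ c : ℝ) (hγ : 0 < γ) (hc : 0 < c)
    (h : ℝ → ℝ) (hh : ∀ p, h p = Real.log (1 + p * γ) - (p + c) * γ / (1 + p * γ)) :
    StrictMonoOn h (Set.Ici (0 : ℝ)) ∧
    h 0 = -(c * γ) ∧ h 0 < 0 ∧
    Filter.Tendsto h Filter.atTop Filter.atTop ∧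
    ∃! p : ℝ, 0 < p ∧ h p = 0 := by
  have hfun : h = fun p => Real.log (1 + p * γ) - (p + c) * γ / (1 + p * γ) :=
    funext hh
  subst hfun
  set f : ℝ → ℝ := fun p => Real.log (1 + p * γ) - (p + c) * γ / (1 + p * γ) with hf
  have hpos : ∀ p : ℝ, 0 ≤ p → 0 < 1 + p * γ := fun p hp => by positivity
  -- derivative
  have hder : ∀ p : ℝ, 0 ≤ p →
      HasDerivAt f ((p + c) * γ ^ 2 / (1 + p * γ) ^ 2) p := by
    intro p hp
    have h1 : (0:ℝ) < 1 + p * γ := hpos p hp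
    have hu : HasDerivAt (fun p : ℝ => 1 + p * γ) γ p := by
      simpa using ((hasDerivAt_id p).mul_const γ).const_add 1
    have hlog : HasDerivAt (fun p : ℝ => Real.log (1 + p * γ)) (γ / (1 + p * γ)) p :=
      hu.log h1.ne'
    have hnum : HasDerivAt (fun p : ℝ => (p + c) * γ) γ p := by
      simpa using ((hasDerivAt_id p).add_const c).mul_const γ
    have hdiv : HasDerivAt (fun p : ℝ => (p + c) * γ / (1 + p * γ))
        ((γ * (1 + p * γ) - (p + c) * γ * γ) / (1 + p * γ) ^ 2) p :=
      hnum.div hu h1.ne'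
    have := hlog.sub hdiv
    refine this.congr_deriv ?_
    field_simp
    ring
  have hcont : ContinuousOn f (Set.Ici (0:ℝ)) := fun p hp =>
    ((hder p hp).continuousAt).continuousWithinAt
  have hmono : StrictMonoOn f (Set.Ici (0:ℝ)) := by
    apply strictMonoOn_of_deriv_pos (convex_Ici 0) hcont
    intro p hp
    rw [interior_Ici] at hp
    have hp' : (0:ℝ) ≤ p := le_of_lt hp
    rw [(hder p hp').deriv]
    have h1 : (0:ℝ) < 1 + p * γ := hpos p hp'
    positivity
  have hzero : f 0 = -(c * γ) := by
    simp [hf]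
  have hzneg : f 0 < 0 := by
    rw [hzero]; exact neg_neg_of_pos (by positivity)
  have htop : Filter.Tendsto f Filter.atTop Filter.atTop := by
    have hlogtop : Filter.Tendsto (fun p : ℝ => Real.log (1 + p * γ) - (1 + c * γ))
        Filter.atTop Filter.atTop := by
      apply Filter.tendsto_atTop_add_const_right
      apply Real.tendsto_log_atTop.comp
      apply Filter.tendsto_atTop_add_const_left
      exact Filter.Tendsto.atTop_mul_const hγ Filter.tendsto_id
    refine Filter.tendsto_atTop_mono' _ ?_ hlogtop
    filter_upwards [Filter.eventually_ge_atTop (0:ℝ)] with p hp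
    have h1 : (0:ℝ) < 1 + p * γ := hpos p hp
    have : (p + c) * γ / (1 + p * γ) ≤ 1 + c * γ := by
      rw [div_le_iff₀ h1]
      nlinarith [mul_nonneg hp hγ.le, mul_nonneg (mul_nonneg hc.le hγ.le) (mul_nonneg hp hγ.le)]
    simp only [hf]
    linarith
  refine ⟨hmono, hzero, hzneg, htop, ?_⟩
  -- existence of root
  obtain ⟨b, hb0, hbpos⟩ : ∃ b : ℝ, 0 ≤ b ∧ 0 < f b := by
    have := (htop.eventually_gt_atTop 0).and (Filter.eventually_ge_atTop (0:ℝ))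
    obtain ⟨b, hb1, hb2⟩ := this.exists
    exact ⟨b, hb2, hb1⟩
  have hsub := intermediate_value_Icc hb0 (hcont.mono (Set.Icc_subset_Ici_self))
  have h0mem : (0:ℝ) ∈ Set.Icc (f 0) (f b) := ⟨hzneg.le, hbpos.le⟩
  obtain ⟨x, hxmem, hxval⟩ := hsub h0mem
  have hx0 : 0 < x := by
    rcases (lt_or_eq_of_le hxmem.1) with hx | hx
    · exact hx
    · exfalso; rw [← hx] at hxval; rw [hxval] at hzneg; exact lt_irrefl 0 hzneg
  refine ⟨x, ⟨hx0, hxval⟩, ?_⟩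
  intro y ⟨hy0, hyval⟩
  exact hmono.injOn (le_of_lt hy0) (le_of_lt hx0) (by rw [hyval, hxval])
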